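/- Let L be a nilpotent restricted Lie algebra over a field of characteristic p > 0 such that the restricted subalgebra L'_p generated by the derived subalgebra [L,L] is p-nilpotent. Then the set I of p-nilpotent elements of L is a subspace of L (in fact a restricted ideal containing L'_p). -/

import Mathlib

/-- A (restricted) `p`-operation on a Lie algebra `L` over a field of characteristic
`p`: a map `x ↦ x^{[p]}` that is `p`-semilinear, satisfies `ad (x^{[p]}) = (ad x)^p`,
and deviates from additivity only by a sum of Lie brackets (Jacobson's formula). -/
class RestrictedLieAlgebra (p : ℕ) (F L : Type*) [Field F] [LieRing L] [LieAlgebra F L] where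
  pPow : L → L
  smul_pPow : ∀ (c : F) (x : L), pPow (c • x) = c ^ p • pPow x
  ad_pPow : ∀ x y : L, ⁅pPow x, y⁆ = ((LieAlgebra.ad F L x) ^ p) y
  add_pPow_mem : ∀ x y : L,
    pPow (x + y) - pPow x - pPow y ∈ Submodule.span F {z : L | ∃ a b : L, z = ⁅a, b⁆}

open RestrictedLieAlgebra

/-- A submodule of `L` is a restricted subalgebra if it is closed under the bracket and
under the `p`-map. -/
def IsRestrictedSubalgebra {p : ℕ} {F L : Type*} [Field F] [LieRing L] [LieAlgebra F L]
    [RestrictedLieAlgebra p F L] (S : Submodule F L) : Prop :=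
  (∀ x ∈ S, ∀ y ∈ S, ⁅x, y⁆ ∈ S) ∧ ∀ x ∈ S, pPow p F x ∈ S

/-- The restricted subalgebra generated by a subset `s` of `L`. -/
def restrictedClosure (p : ℕ) (F : Type*) {L : Type*} [Field F] [LieRing L] [LieAlgebra F L]
    [RestrictedLieAlgebra p F L] (s : Set L) : Submodule F L :=
  sInf {S : Submodule F L | s ⊆ S ∧ IsRestrictedSubalgebra (p := p) (F := F) S}

section Aux
variable {p : ℕ} [Fact p.Prime] {F L : Type*} [Field F]
  [LieRing L] [LieAlgebra F L] [RestrictedLieAlgebra p F L]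

lemma pPow_zero : pPow p F (0 : L) = 0 := by
  have h := smul_pPow (p := p) (L := L) (0 : F) 0
  simpa [zero_pow (Fact.out : p.Prime).ne_zero] using h

lemma iterate_pPow_zero (t : ℕ) : (pPow p F)^[t] (0 : L) = 0 := by
  induction t with
  | zero => rfl
  | succ t ih => rw [Function.iterate_succ_apply, pPow_zero, ih]

lemma iterate_pPow_smul (c : F) (x : L) (t : ℕ) :
    (pPow p F)^[t] (c • x) = c ^ (p ^ t) • (pPow p F)^[t] x := by
  induction t with
  | zero => simp
  | succ t ih =>
      rw [Function.iterate_succ_apply', ih, smul_pPow, Function.iterate_succ_apply',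
        ← pow_mul, pow_succ]

lemma span_le_closure :
    Submodule.span F {z : L | ∃ a b : L, z = ⁅a, b⁆} ≤
      restrictedClosure p F {z : L | ∃ a b : L, z = ⁅a, b⁆} :=
  le_sInf fun _ hS => Submodule.span_le.mpr hS.1

lemma pPow_mem_closure {x : L}
    (hx : x ∈ restrictedClosure p F {z : L | ∃ a b : L, z = ⁅a, b⁆}) :
    pPow p F x ∈ restrictedClosure p F {z : L | ∃ a b : L, z = ⁅a, b⁆} := by
  rw [restrictedClosure, Submodule.mem_sInf] at hx ⊢
  exact fun S hS => hS.2.2 x (hx S hS)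

lemma iterate_pPow_add_sub_mem (x y : L) (k : ℕ) :
    (pPow p F)^[k] (x + y) - (pPow p F)^[k] x - (pPow p F)^[k] y ∈
      restrictedClosure p F {z : L | ∃ a b : L, z = ⁅a, b⁆} := by
  set C := restrictedClosure p F {z : L | ∃ a b : L, z = ⁅a, b⁆} with hC
  induction k with
  | zero => simpa using C.zero_mem
  | succ k ih =>
      set u := (pPow p F)^[k] x
      set v := (pPow p F)^[k] y
      set w := (pPow p F)^[k] (x + y)
      set c := w - u - v with hc
      have h1 : pPow p F ((u + v) + c) - pPow p F (u + v) - pPow p F c ∈ C :=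
        span_le_closure (add_pPow_mem (u + v) c)
      have h2 : pPow p F (u + v) - pPow p F u - pPow p F v ∈ C :=
        span_le_closure (add_pPow_mem u v)
      have h3 : pPow p F c ∈ C := pPow_mem_closure ih
      have hw : (u + v) + c = w := by rw [hc]; abel
      rw [hw] at h1
      have hmem := C.add_mem (C.add_mem h1 h3) h2
      have : pPow p F w - pPow p F u - pPow p F v ∈ C := by
        convert hmem using 1; abel
      simpa only [Function.iterate_succ_apply'] using this

lemma iterate_pPow_stable {x : L} {t : ℕ} (h : (pPow p F)^[t] x = 0) {s : ℕ} (hs : t ≤ s) :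
    (pPow p F)^[s] x = 0 := by
  obtain ⟨d, rfl⟩ := Nat.exists_eq_add_of_le hs
  rw [Nat.add_comm, Function.iterate_add_apply, h, iterate_pPow_zero]

end Aux

/-- if `L` is a nilpotent restricted Lie algebra over a field of
characteristic `p > 0` whose restricted subalgebra `L'ₚ` generated by `[L,L]` is
`p`-nilpotent, then the set of `p`-nilpotent elements of `L` is a subspace of `L`;
in fact it is a restricted ideal containing `L'ₚ`. -/
theorem pNilpotent_elements_form_subspace (p : ℕ) [Fact p.Prime] (F L : Type*) [Field F]
    [CharP F p] [LieRing L] [LieAlgebra F L] [RestrictedLieAlgebra p F L]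
    [LieModule.IsNilpotent L L]
    (hnil : ∃ n : ℕ, ∀ x ∈ restrictedClosure p F {z : L | ∃ a b : L, z = ⁅a, b⁆},
      (pPow p F)^[n] x = 0) :
    ∃ I : Submodule F L,
      (I : Set L) = {x : L | ∃ t : ℕ, (pPow p F)^[t] x = 0} ∧
      (∀ x ∈ I, ∀ y : L, ⁅y, x⁆ ∈ I) ∧
      (∀ x ∈ I, pPow p F x ∈ I) ∧
      restrictedClosure p F {z : L | ∃ a b : L, z = ⁅a, b⁆} ≤ I := by

  classical
  obtain ⟨n, hn⟩ := hnil
  refine ⟨{ carrier := {x : L | ∃ t : ℕ, (pPow p F)^[t] x = 0}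
          , zero_mem' := ⟨0, rfl⟩
          , add_mem' := ?_
          , smul_mem' := ?_ }, rfl, ?_, ?_, ?_⟩
  · rintro a b ⟨s, hs⟩ ⟨t, ht⟩
    have ha : (pPow p F)^[max s t] a = 0 := iterate_pPow_stable hs (le_max_left s t)
    have hb : (pPow p F)^[max s t] b = 0 := iterate_pPow_stable ht (le_max_right s t)
    have hmem := iterate_pPow_add_sub_mem (p := p) (F := F) a b (max s t)
    rw [ha, hb, sub_zero, sub_zero] at hmem
    exact ⟨n + max s t, by rw [Function.iterate_add_apply]; exact hn _ hmem⟩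
  · rintro c a ⟨t, ht⟩
    exact ⟨t, by rw [iterate_pPow_smul, ht, smul_zero]⟩
  · rintro x - y
    have hmem : ⁅y, x⁆ ∈ restrictedClosure p F {z : L | ∃ a b : L, z = ⁅a, b⁆} :=
      span_le_closure (Submodule.subset_span ⟨y, x, rfl⟩)
    exact ⟨n, hn _ hmem⟩
  · rintro x ⟨s, hs⟩
    exact ⟨s, by rw [← Function.iterate_succ_apply, Function.iterate_succ_apply', hs, pPow_zero]⟩
  · intro x hx
    exact ⟨n, hn x hx⟩
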